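/- There exist absolute constants c₁, c₂ ≥ 1 such that the following holds. Let d, n ≥ 1 be integers and 0 < δ ≤ ε ≤ 1/3. Let x = (x₁,…,xₙ) and x' = (x₁',…,xₙ') be tuples in (ℝ^d)ⁿ with xᵢ = xᵢ' for all but at most one index i. For a tuple y = (y₁,…,yₙ), define f_y(p) = #{i : ‖p − yᵢ‖₂ ≤ √d} for p ∈ ℝ^d, the measure ν_y(S) = ∫_S 1[f_y(p) ≥ 1]·e^{ε·min(f_y(p), 2n/3)} dp for Borel S ⊆ ℝ^d, and the total mass Z_y = ν_y(ℝ^d) + (4/δ)·V_B, where V_B is the Lebesgue volume of a ball of radius √d in ℝ^d. Then for every Borel set S ⊆ ℝ^d and every t ∈ {0, 1}: (ν_x(S) + t·(4/δ)·V_B)/Z_x ≤ e^{c₁·ε}·(ν_{x'}(S) + t·(4/δ)·V_B)/Z_{x'} + c₂·δ. -/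

import Mathlib

open MeasureTheory Metric
open scoped ENNReal Classical

/-- The (unnormalized) exponential-mechanism measure over `ℝ^d` determined by the data
`y₁, …, yₙ`: on a Borel set `S` it integrates `e^{ε·min(f_y(p), 2n/3)}` over the points
`p ∈ S` covered by at least one ball of radius `√d` around some `yᵢ`, where `f_y(p)` is
the number of such balls containing `p`. -/
noncomputable def nuMeas (d n : ℕ) (ε : ℝ) (y : Fin n → EuclideanSpace ℝ (Fin d))
    (S : Set (EuclideanSpace ℝ (Fin d))) : ℝ≥0∞ :=
  ∫⁻ p in S,
    if 1 ≤ (Finset.univ.filter (fun i => dist p (y i) ≤ Real.sqrt d)).card then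
      ENNReal.ofReal (Real.exp (ε * min
        (((Finset.univ.filter (fun i => dist p (y i) ≤ Real.sqrt d)).card : ℝ))
        (2 * (n : ℝ) / 3)))
    else 0

set_option linter.unnecessarySimpa false in
/-- Pointwise density comparison when one data point changes. -/
lemma pointwise_bound_aux {d n : ℕ} {ε : ℝ} (hε0 : 0 ≤ ε)
    (x x' : Fin n → EuclideanSpace ℝ (Fin d)) (i₀ : Fin n)
    (hx : ∀ i, i ≠ i₀ → x i = x' i) (p : EuclideanSpace ℝ (Fin d)) :
    (if 1 ≤ (Finset.univ.filter (fun i => dist p (x i) ≤ Real.sqrt d)).card then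
      ENNReal.ofReal (Real.exp (ε * min
        (((Finset.univ.filter (fun i => dist p (x i) ≤ Real.sqrt d)).card : ℝ))
        (2 * (n : ℝ) / 3)))
    else 0)
    ≤ ENNReal.ofReal (Real.exp ε) *
      (if 1 ≤ (Finset.univ.filter (fun i => dist p (x' i) ≤ Real.sqrt d)).card then
        ENNReal.ofReal (Real.exp (ε * min
          (((Finset.univ.filter (fun i => dist p (x' i) ≤ Real.sqrt d)).card : ℝ))
          (2 * (n : ℝ) / 3)))
      else 0)
      + (closedBall (x i₀) (Real.sqrt d)).indicator
          (fun _ => ENNReal.ofReal (Real.exp ε)) p := by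
  set F := Finset.univ.filter (fun i => dist p (x i) ≤ Real.sqrt d) with hF
  set F' := Finset.univ.filter (fun i => dist p (x' i) ≤ Real.sqrt d) with hF'
  by_cases h1 : 1 ≤ F.card
  · by_cases h2 : 1 ≤ F'.card
    · have hsub : F ⊆ insert i₀ F' := by
        intro i hi
        rcases eq_or_ne i i₀ with rfl | hne
        · exact Finset.mem_insert_self _ _
        · refine Finset.mem_insert_of_mem ?_
          simp only [hF, hF', Finset.mem_filter, Finset.mem_univ, true_and] at hi ⊢
          rwa [← hx i hne]
      have hcard : F.card ≤ F'.card + 1 :=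
        (Finset.card_le_card hsub).trans (Finset.card_insert_le _ _)
      rw [if_pos h1, if_pos h2]
      refine le_trans ?_ le_self_add
      rw [← ENNReal.ofReal_mul (Real.exp_pos _).le, ← Real.exp_add]
      refine ENNReal.ofReal_le_ofReal (Real.exp_le_exp.mpr ?_)
      have : min (F.card : ℝ) (2 * n / 3) ≤ min (F'.card : ℝ) (2 * n / 3) + 1 := by
        have : (F.card : ℝ) ≤ (F'.card : ℝ) + 1 := by exact_mod_cast hcard
        rcases le_total ((F'.card:ℝ)) (2*n/3) with h | h
        · rw [min_eq_left h]
          exact le_trans (min_le_left _ _) (by linarith)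
        · rw [min_eq_right h]
          linarith [min_le_right (F.card:ℝ) (2*n/3)]
      nlinarith [this, hε0]
    · have hFsub : F ⊆ {i₀} := by
        intro i hi
        by_contra hne
        rw [Finset.mem_singleton] at hne
        apply h2
        refine Finset.card_pos.mpr ⟨i, ?_⟩
        simp only [hF, hF', Finset.mem_filter, Finset.mem_univ, true_and] at hi ⊢
        rwa [← hx i hne]
      have hi₀ : i₀ ∈ F := by
        rcases Finset.card_pos.mp h1 with ⟨i, hi⟩
        have := hFsub hi
        rw [Finset.mem_singleton] at this
        exact this ▸ hi
      have hpball : p ∈ closedBall (x i₀) (Real.sqrt d) := by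
        simp only [hF, Finset.mem_filter, Finset.mem_univ, true_and] at hi₀
        rwa [mem_closedBall]
      have hcard1 : F.card = 1 := le_antisymm (by simpa using Finset.card_le_card hFsub) h1
      rw [if_pos h1, Set.indicator_of_mem hpball]
      refine le_trans ?_ le_add_self
      refine ENNReal.ofReal_le_ofReal (Real.exp_le_exp.mpr ?_)
      rw [hcard1]
      have : min ((1:ℕ) : ℝ) (2 * n / 3) ≤ 1 := by
        simpa using min_le_left (1:ℝ) _
      nlinarith [this]
  · rw [if_neg h1]
    exact zero_le

/-- Changing one data point multiplies the exponential-mechanism measure by at most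
`e^ε`, up to an additive error of `e^ε` times the volume of a radius-`√d` ball. -/
lemma nu_le_aux {d n : ℕ} {ε : ℝ} (hε0 : 0 ≤ ε)
    (x x' : Fin n → EuclideanSpace ℝ (Fin d)) (i₀ : Fin n)
    (hx : ∀ i, i ≠ i₀ → x i = x' i) (S : Set (EuclideanSpace ℝ (Fin d))) :
    nuMeas d n ε x S ≤ ENNReal.ofReal (Real.exp ε) * nuMeas d n ε x' S +
      ENNReal.ofReal (Real.exp ε) *
        volume (closedBall (0 : EuclideanSpace ℝ (Fin d)) (Real.sqrt d)) := by
  unfold nuMeas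
  calc ∫⁻ p in S, _ ∂volume
      ≤ ∫⁻ p in S, (ENNReal.ofReal (Real.exp ε) *
          (if 1 ≤ (Finset.univ.filter (fun i => dist p (x' i) ≤ Real.sqrt d)).card then
            ENNReal.ofReal (Real.exp (ε * min
              (((Finset.univ.filter (fun i => dist p (x' i) ≤ Real.sqrt d)).card : ℝ))
              (2 * (n : ℝ) / 3)))
          else 0)
          + (closedBall (x i₀) (Real.sqrt d)).indicator
              (fun _ => ENNReal.ofReal (Real.exp ε)) p) ∂volume :=
        lintegral_mono (fun p => pointwise_bound_aux hε0 x x' i₀ hx p)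
    _ ≤ _ := by
        rw [lintegral_add_right _ (measurable_const.indicator measurableSet_closedBall),
          lintegral_const_mul' _ _ ENNReal.ofReal_ne_top]
        gcongr
        calc ∫⁻ a in S, (closedBall (x i₀) (Real.sqrt d)).indicator
              (fun _ => ENNReal.ofReal (Real.exp ε)) a
            = ENNReal.ofReal (Real.exp ε) *
                (volume.restrict S) (closedBall (x i₀) (Real.sqrt d)) :=
              lintegral_indicator_const measurableSet_closedBall _
          _ ≤ ENNReal.ofReal (Real.exp ε) * volume (closedBall (x i₀) (Real.sqrt d)) := by
              gcongr
              exact Measure.restrict_le_self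
          _ = _ := by rw [Measure.addHaar_closedBall_center]

/-- The exponential-mechanism measure is finite. -/
lemma nu_ne_top_aux {d n : ℕ} {ε : ℝ} (hε0 : 0 ≤ ε)
    (y : Fin n → EuclideanSpace ℝ (Fin d)) (S : Set (EuclideanSpace ℝ (Fin d))) :
    nuMeas d n ε y S ≠ ⊤ := by
  have hb : ∀ p : EuclideanSpace ℝ (Fin d),
      (if 1 ≤ (Finset.univ.filter (fun i => dist p (y i) ≤ Real.sqrt d)).card then
        ENNReal.ofReal (Real.exp (ε * min
          (((Finset.univ.filter (fun i => dist p (y i) ≤ Real.sqrt d)).card : ℝ))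
          (2 * (n : ℝ) / 3)))
      else 0)
      ≤ (⋃ i, closedBall (y i) (Real.sqrt d)).indicator
          (fun _ => ENNReal.ofReal (Real.exp (ε * (2 * (n:ℝ) / 3)))) p := by
    intro p
    by_cases h1 : 1 ≤ (Finset.univ.filter (fun i => dist p (y i) ≤ Real.sqrt d)).card
    · rcases Finset.card_pos.mp h1 with ⟨i, hi⟩
      simp only [Finset.mem_filter, Finset.mem_univ, true_and] at hi
      have hp : p ∈ ⋃ i, closedBall (y i) (Real.sqrt d) :=
        Set.mem_iUnion.mpr ⟨i, by rwa [mem_closedBall]⟩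
      rw [if_pos h1, Set.indicator_of_mem hp]
      refine ENNReal.ofReal_le_ofReal (Real.exp_le_exp.mpr ?_)
      have := min_le_right (((Finset.univ.filter
        (fun i => dist p (y i) ≤ Real.sqrt d)).card : ℝ)) (2 * (n:ℝ) / 3)
      nlinarith
    · rw [if_neg h1]
      exact zero_le
  refine ne_top_of_le_ne_top ?_ (lintegral_mono hb)
  rw [lintegral_indicator_const (MeasurableSet.iUnion (fun i => measurableSet_closedBall))]
  have hle : (volume.restrict S) (⋃ i, closedBall (y i) (Real.sqrt d)) ≤
      ∑ i : Fin n, volume (closedBall (y i) (Real.sqrt d)) := by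
    refine le_trans (measure_iUnion_le _) ?_
    rw [← tsum_fintype (L := SummationFilter.unconditional (Fin n))]
    exact ENNReal.tsum_le_tsum (fun i => Measure.restrict_apply_le _ _)
  have hfin : (volume.restrict S) (⋃ i, closedBall (y i) (Real.sqrt d)) < ⊤ :=
    lt_of_le_of_lt hle (ENNReal.sum_lt_top.mpr (fun i _ => measure_closedBall_lt_top))
  exact ENNReal.mul_ne_top ENNReal.ofReal_ne_top hfin.ne

/-- Privacy of the exponential-mechanism-style distribution with a garbage atom of mass
`(4/δ)·V_B`: changing one data point changes the normalized probability of any Borel set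
(with or without the garbage atom) by at most an `e^{c₁ε}` factor plus `c₂δ`. -/
theorem stmt_13 :
    ∃ c₁ c₂ : ℝ, 1 ≤ c₁ ∧ 1 ≤ c₂ ∧
      ∀ (d n : ℕ), 1 ≤ d → 1 ≤ n →
      ∀ ε δ : ℝ, 0 < δ → δ ≤ ε → ε ≤ 1/3 →
      ∀ x x' : Fin n → EuclideanSpace ℝ (Fin d),
        (∃ i₀, ∀ i, i ≠ i₀ → x i = x' i) →
      ∀ S : Set (EuclideanSpace ℝ (Fin d)), MeasurableSet S →
      ∀ t : ℝ≥0∞, t = 0 ∨ t = 1 →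
        (nuMeas d n ε x S + t * (ENNReal.ofReal (4 / δ) *
              volume (closedBall (0 : EuclideanSpace ℝ (Fin d)) (Real.sqrt d)))) /
            (nuMeas d n ε x Set.univ + ENNReal.ofReal (4 / δ) *
              volume (closedBall (0 : EuclideanSpace ℝ (Fin d)) (Real.sqrt d))) ≤
          ENNReal.ofReal (Real.exp (c₁ * ε)) *
            ((nuMeas d n ε x' S + t * (ENNReal.ofReal (4 / δ) *
                volume (closedBall (0 : EuclideanSpace ℝ (Fin d)) (Real.sqrt d)))) /
              (nuMeas d n ε x' Set.univ + ENNReal.ofReal (4 / δ) *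
                volume (closedBall (0 : EuclideanSpace ℝ (Fin d)) (Real.sqrt d)))) +
          ENNReal.ofReal (c₂ * δ) := by
  refine ⟨3, 1, by norm_num, le_rfl, ?_⟩
  intro d n hd hn ε δ hδ hδε hε13 x x' ⟨i₀, hx⟩ S _ t _
  have hε0 : (0:ℝ) ≤ ε := le_trans hδ.le hδε
  set V := volume (closedBall (0 : EuclideanSpace ℝ (Fin d)) (Real.sqrt d)) with hV
  set G := ENNReal.ofReal (4 / δ) * V with hG
  set E := ENNReal.ofReal (Real.exp ε) with hE
  set o2 := ENNReal.ofReal (δ / 2) with ho2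
  set K := E + o2 with hK
  have hV0 : 0 < V := measure_closedBall_pos volume 0
    (Real.sqrt_pos.mpr (by exact_mod_cast Nat.pos_of_ne_zero (by omega)))
  have hVtop : V < ⊤ := measure_closedBall_lt_top
  have hG0 : G ≠ 0 := by
    refine mul_ne_zero ?_ hV0.ne'
    simp only [ne_eq, ENNReal.ofReal_eq_zero, not_le]
    positivity
  have hGtop : G ≠ ⊤ := ENNReal.mul_ne_top ENNReal.ofReal_ne_top hVtop.ne
  have hE1 : 1 ≤ E := by
    rw [hE, ← ENNReal.ofReal_one]
    exact ENNReal.ofReal_le_ofReal (Real.one_le_exp hε0)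
  have hEtop : E ≠ ⊤ := ENNReal.ofReal_ne_top
  have hK0 : K ≠ 0 := by
    intro h
    rw [hK, add_eq_zero] at h
    exact absurd h.1 (by intro h0; rw [h0] at hE1; exact absurd hE1 (by simp))
  have hKtop : K ≠ ⊤ := by
    rw [hK]
    exact ENNReal.add_ne_top.mpr ⟨hEtop, ENNReal.ofReal_ne_top⟩
  -- exp ε ≤ 2
  have hexp2 : Real.exp ε ≤ 2 := by
    have h13 : ε ≤ Real.log 2 := le_trans hε13 (by linarith [Real.log_two_gt_d9])
    calc Real.exp ε ≤ Real.exp (Real.log 2) := Real.exp_le_exp.mpr h13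
      _ = 2 := Real.exp_log two_pos
  have hEV : E * V ≤ o2 * G := by
    have h2V : o2 * G = ENNReal.ofReal 2 * V := by
      rw [ho2, hG, ← mul_assoc, ← ENNReal.ofReal_mul (by positivity)]
      congr 2
      field_simp
      ring
    rw [h2V]
    exact mul_le_mul' (ENNReal.ofReal_le_ofReal hexp2) (le_refl V)
  -- set Z, Z', A, A'
  set A := nuMeas d n ε x S + t * G with hA
  set Z := nuMeas d n ε x Set.univ + G with hZ
  set A' := nuMeas d n ε x' S + t * G with hA'
  set Z' := nuMeas d n ε x' Set.univ + G with hZ'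
  have hZ0 : Z ≠ 0 := by
    intro h
    rw [hZ, add_eq_zero] at h
    exact hG0 h.2
  have hZtop : Z ≠ ⊤ := ENNReal.add_ne_top.mpr ⟨nu_ne_top_aux hε0 x _, hGtop⟩
  have hGZ : G ≤ Z := le_add_self
  -- main numerator bound
  have h1 : A ≤ E * A' + o2 * G := by
    calc A ≤ (E * nuMeas d n ε x' S + E * V) + t * G :=
          add_le_add_left (nu_le_aux hε0 x x' i₀ hx S) _
      _ ≤ (E * nuMeas d n ε x' S + o2 * G) + E * (t * G) :=
          add_le_add (add_le_add_right hEV (E * nuMeas d n ε x' S))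
            (le_mul_of_one_le_left zero_le hE1)
      _ = E * A' + o2 * G := by rw [hA']; ring
  -- denominator bound
  have hx' : ∀ i, i ≠ i₀ → x' i = x i := fun i hi => (hx i hi).symm
  have h2 : Z' ≤ K * Z := by
    calc Z' ≤ (E * nuMeas d n ε x Set.univ + E * V) + G :=
          add_le_add_left (nu_le_aux hε0 x' x i₀ hx' Set.univ) _
      _ ≤ (E * nuMeas d n ε x Set.univ + o2 * G) + E * G :=
          add_le_add (add_le_add_right hEV (E * nuMeas d n ε x Set.univ))
            (le_mul_of_one_le_left zero_le hE1)
      _ ≤ (E * nuMeas d n ε x Set.univ +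
            (o2 * nuMeas d n ε x Set.univ + o2 * G)) + E * G :=
          add_le_add_left
            (add_le_add_right le_add_self (E * nuMeas d n ε x Set.univ)) _
      _ = K * Z := by rw [hK, hZ]; ring
  have hinv : Z⁻¹ ≤ K * Z'⁻¹ := by
    calc Z⁻¹ = (K * K⁻¹) * Z⁻¹ := by rw [ENNReal.mul_inv_cancel hK0 hKtop, one_mul]
      _ = K * (K * Z)⁻¹ := by
          rw [ENNReal.mul_inv (Or.inl hK0) (Or.inl hKtop), mul_assoc]
      _ ≤ K * Z'⁻¹ := mul_le_mul' (le_refl K) (ENNReal.inv_le_inv' h2)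
  have hEK : E * K ≤ ENNReal.ofReal (Real.exp (3 * ε)) := by
    rw [hK, hE, ho2, ← ENNReal.ofReal_add (Real.exp_pos _).le (by positivity),
      ← ENNReal.ofReal_mul (Real.exp_pos _).le]
    refine ENNReal.ofReal_le_ofReal ?_
    have h3 : Real.exp (3 * ε) = Real.exp ε * Real.exp ε * Real.exp ε := by
      rw [← Real.exp_add, ← Real.exp_add]
      ring_nf
    rw [h3]
    have hu1 : 1 ≤ Real.exp ε := Real.one_le_exp hε0
    have hue : ε + 1 ≤ Real.exp ε := Real.add_one_le_exp ε
    nlinarith [hu1, hue, hδ, hδε, Real.exp_pos ε,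
      mul_le_mul_of_nonneg_left hue (Real.exp_pos ε).le,
      mul_le_mul_of_nonneg_left hu1 (Real.exp_pos ε).le]
  -- final computation
  rw [div_eq_mul_inv, div_eq_mul_inv]
  calc A * Z⁻¹ ≤ (E * A' + o2 * G) * Z⁻¹ := mul_le_mul' h1 le_rfl
    _ = E * A' * Z⁻¹ + o2 * (G * Z⁻¹) := by ring
    _ ≤ E * A' * (K * Z'⁻¹) + o2 * 1 := by
        refine add_le_add (mul_le_mul' le_rfl hinv) (mul_le_mul' le_rfl ?_)
        calc G * Z⁻¹ ≤ Z * Z⁻¹ := mul_le_mul' hGZ le_rfl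
          _ = 1 := ENNReal.mul_inv_cancel hZ0 hZtop
    _ = (E * K) * (A' * Z'⁻¹) + o2 := by rw [mul_one]; ring
    _ ≤ ENNReal.ofReal (Real.exp (3 * ε)) * (A' * Z'⁻¹) + ENNReal.ofReal (1 * δ) := by
        refine add_le_add (mul_le_mul' hEK le_rfl) (ENNReal.ofReal_le_ofReal (by linarith))
    _ = _ := rfl
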